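/- arXiv:1111.1348 — 4 statements merged into one kernel-verified Lean document; each statement's English description precedes it below -/
import Mathlib

section
/- If L is a full-rank lattice in ℝⁿ with covering radius ν(L) and b > 2ν(L), then (b − 2ν(L))ⁿ / det(L) ≤ |L ∩ [0,b)ⁿ| ≤ (b + 2ν(L))ⁿ / det(L). -/
open scoped RealInnerProductSpace

/-- The half-open cube `[0,r)ⁿ` in ℝⁿ. -/
def cube (n : ℕ) (r : ℝ) : Set (EuclideanSpace ℝ (Fin n)) :=
  {x | ∀ i, 0 ≤ x i ∧ x i < r}

/-- The covering radius of a set `L ⊆ ℝⁿ`: the least `r ≥ 0` such that every point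
of ℝⁿ is within distance `r` of some point of `L`. -/
noncomputable def covRad {n : ℕ} (L : Set (EuclideanSpace ℝ (Fin n))) : ℝ :=
  sInf {r : ℝ | 0 ≤ r ∧ ∀ x : EuclideanSpace ℝ (Fin n), ∃ v ∈ L, dist x v ≤ r}

/-- The covolume of the full-rank lattice spanned by the basis `b`:
the absolute value of the determinant of the matrix of basis vectors. -/
noncomputable def covDet {n : ℕ} (b : Module.Basis (Fin n) ℝ (EuclideanSpace ℝ (Fin n))) : ℝ :=
  |(Matrix.of fun i j => b i j : Matrix (Fin n) (Fin n) ℝ).det|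

/-- The first successive minimum of `L`: the infimum of the norms of nonzero elements. -/
noncomputable def firstMin {n : ℕ} (L : Set (EuclideanSpace ℝ (Fin n))) : ℝ :=
  sInf {r : ℝ | ∃ v ∈ L, v ≠ 0 ∧ ‖v‖ = r}

open MeasureTheory Submodule Bornology Metric
open scoped Pointwise

section Aux

variable {n : ℕ} (b : Module.Basis (Fin n) ℝ (EuclideanSpace ℝ (Fin n)))

lemma coord_abs_le_norm (x : EuclideanSpace ℝ (Fin n)) (i : Fin n) : |x i| ≤ ‖x‖ := by
  rw [EuclideanSpace.norm_eq]
  have h1 : |x i| = Real.sqrt (‖x i‖ ^ 2) := by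
    rw [Real.sqrt_sq_eq_abs]; simp [abs_abs]
  rw [h1]
  apply Real.sqrt_le_sqrt
  exact Finset.single_le_sum (f := fun j => ‖x j‖ ^ 2) (fun j _ => by positivity) (Finset.mem_univ i)

lemma volume_icoBox (a d : ℝ) (h : a ≤ d) :
    volume {x : EuclideanSpace ℝ (Fin n) | ∀ i, a ≤ x i ∧ x i < d}
      = ENNReal.ofReal ((d - a) ^ n) := by
  have hme := EuclideanSpace.volume_preserving_symm_measurableEquiv_toLp (Fin n)
  have hset : {x : EuclideanSpace ℝ (Fin n) | ∀ i, a ≤ x i ∧ x i < d}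
      = (MeasurableEquiv.toLp 2 (Fin n → ℝ)).symm ⁻¹'
        (Set.univ.pi fun _ : Fin n => Set.Ico a d) := by
    ext x
    simp [Set.mem_pi, Set.mem_Ico]
  rw [hset, hme.measure_preimage
    ((MeasurableSet.univ_pi fun _ => measurableSet_Ico).nullMeasurableSet)]
  rw [volume_pi_pi]
  simp [Real.volume_Ico, Finset.prod_const, ENNReal.ofReal_pow (by linarith : (0:ℝ) ≤ d - a)]

lemma volume_fd (b : Module.Basis (Fin n) ℝ (EuclideanSpace ℝ (Fin n))) :
    volume (ZSpan.fundamentalDomain b) = ENNReal.ofReal (covDet b) := by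
  classical
  let e := (EuclideanSpace.equiv (Fin n) ℝ).toLinearEquiv
  have hme := EuclideanSpace.volume_preserving_symm_measurableEquiv_toLp (Fin n)
  have h1 : (MeasurableEquiv.toLp 2 (Fin n → ℝ)).symm ⁻¹'
      (ZSpan.fundamentalDomain (b.map e)) = ZSpan.fundamentalDomain b := by
    rw [← ZSpan.map_fundamentalDomain b e]
    exact Set.preimage_image_eq _ (EquivLike.injective _)
  have h2 : volume (ZSpan.fundamentalDomain b)
      = volume (ZSpan.fundamentalDomain (b.map e)) := by
    rw [← h1, hme.measure_preimage
      (ZSpan.fundamentalDomain_measurableSet (b.map e)).nullMeasurableSet]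
  rw [h2, ZSpan.volume_fundamentalDomain]
  congr 2

lemma covRadSet_nonempty :
    {r : ℝ | 0 ≤ r ∧ ∀ x : EuclideanSpace ℝ (Fin n),
      ∃ v ∈ ((Submodule.span ℤ (Set.range ⇑b)) : Set (EuclideanSpace ℝ (Fin n))), dist x v ≤ r}.Nonempty := by
  obtain ⟨R, hR⟩ := isBounded_iff_forall_norm_le.1 (ZSpan.fundamentalDomain_isBounded b)
  refine ⟨max R 0, le_max_right _ _, fun x => ⟨↑(ZSpan.floor b x), SetLike.coe_mem _, ?_⟩⟩
  have h : dist x ↑(ZSpan.floor b x) = ‖ZSpan.fract b x‖ := by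
    rw [dist_eq_norm, ZSpan.fract_apply]
  rw [h]
  exact le_trans (hR _ (ZSpan.fract_mem_fundamentalDomain b x)) (le_max_left _ _)

lemma covRad_nonneg : 0 ≤ covRad ((Submodule.span ℤ (Set.range ⇑b)) : Set (EuclideanSpace ℝ (Fin n))) :=
  le_csInf (covRadSet_nonempty b) fun _ hr => hr.1

lemma latt_countable : (((Submodule.span ℤ (Set.range ⇑b)) : Set (EuclideanSpace ℝ (Fin n)))).Countable := by
  have h : (((Submodule.span ℤ (Set.range ⇑b)) : Set (EuclideanSpace ℝ (Fin n))))
      = Set.range (fun c : Fin n → ℤ => ∑ i, c i • b i) := by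
    ext x
    simp [SetLike.mem_coe, mem_span_range_iff_exists_fun, Set.mem_range]
  rw [h]
  exact Set.countable_range _

lemma latt_closed : IsClosed (((Submodule.span ℤ (Set.range ⇑b)) : Set (EuclideanSpace ℝ (Fin n)))) := by
  have : DiscreteTopology ((Submodule.span ℤ (Set.range ⇑b)).toAddSubgroup) := inferInstance
  exact AddSubgroup.isClosed_of_discrete (H := (Submodule.span ℤ (Set.range ⇑b)).toAddSubgroup)

lemma exists_nearest (x : EuclideanSpace ℝ (Fin n)) :
    ∃ v ∈ ((Submodule.span ℤ (Set.range ⇑b)) : Set (EuclideanSpace ℝ (Fin n))),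
      dist x v ≤ covRad ((Submodule.span ℤ (Set.range ⇑b)) : Set (EuclideanSpace ℝ (Fin n))) ∧
      ∀ w ∈ ((Submodule.span ℤ (Set.range ⇑b)) : Set (EuclideanSpace ℝ (Fin n))), dist x v ≤ dist x w := by
  obtain ⟨v, hvL, hv⟩ := (latt_closed b).exists_infDist_eq_dist
    ⟨0, by exact zero_mem _⟩ x
  refine ⟨v, hvL, ?_, fun w hw => ?_⟩
  · rw [← hv]
    refine le_csInf (covRadSet_nonempty b) fun r hr => ?_
    obtain ⟨w, hw, hd⟩ := hr.2 x
    exact (Metric.infDist_le_dist_of_mem hw).trans hd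
  · rw [← hv]
    exact Metric.infDist_le_dist_of_mem hw

/-- The (open) Voronoi cell of the lattice at the origin. -/
def voro {n : ℕ} (b : Module.Basis (Fin n) ℝ (EuclideanSpace ℝ (Fin n))) :
    Set (EuclideanSpace ℝ (Fin n)) :=
  {x | ∀ v ∈ ((Submodule.span ℤ (Set.range ⇑b)) : Set (EuclideanSpace ℝ (Fin n))),
    v ≠ 0 → dist x 0 < dist x v}

lemma voro_measurable : MeasurableSet (voro b) := by
  have h : voro b = ⋂ v ∈ ((Submodule.span ℤ (Set.range ⇑b)) :
      Set (EuclideanSpace ℝ (Fin n))), {x | v ≠ 0 → dist x 0 < dist x v} := by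
    ext x
    simp [voro]
  rw [h]
  refine MeasurableSet.biInter (latt_countable b) fun v hv => ?_
  by_cases hv0 : v = 0
  · convert MeasurableSet.univ
    ext x; simp [hv0]
  · have h2 : {x : EuclideanSpace ℝ (Fin n) | v ≠ 0 → dist x 0 < dist x v}
        = {x | dist x 0 < dist x v} := by ext x; simp [hv0]
    rw [h2]
    exact measurableSet_lt ((continuous_id.dist continuous_const).measurable)
      ((continuous_id.dist continuous_const).measurable)

lemma voro_dist_le {x : EuclideanSpace ℝ (Fin n)} (hx : x ∈ voro b) :
    dist x 0 ≤ covRad ((Submodule.span ℤ (Set.range ⇑b)) : Set (EuclideanSpace ℝ (Fin n))) := by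
  obtain ⟨v, hvL, hvd, -⟩ := exists_nearest b x
  by_cases h : v = 0
  · rwa [h] at hvd
  · exact le_of_lt (lt_of_lt_of_le (hx v hvL h) hvd)

lemma voro_disjoint {v w : EuclideanSpace ℝ (Fin n)}
    (hv : v ∈ Submodule.span ℤ (Set.range ⇑b)) (hw : w ∈ Submodule.span ℤ (Set.range ⇑b))
    (hvw : v ≠ w) : Disjoint (v +ᵥ voro b) (w +ᵥ voro b) := by
  rw [Set.disjoint_left]
  rintro x hxv hxw
  rw [Set.mem_vadd_set_iff_neg_vadd_mem] at hxv hxw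
  have h1 := hxv (w - v) (sub_mem hw hv) (sub_ne_zero.mpr (Ne.symm hvw))
  have h2 := hxw (v - w) (sub_mem hv hw) (sub_ne_zero.mpr hvw)
  simp only [vadd_eq_add, dist_eq_norm] at h1 h2
  rw [show -v + x - 0 = x - v from by abel, show -v + x - (w - v) = x - w from by abel] at h1
  rw [show -w + x - 0 = x - w from by abel, show -w + x - (v - w) = x - v from by abel] at h2
  linarith

/-- The set of points equidistant from two distinct lattice points; a null set. -/
def badSet {n : ℕ} (b : Module.Basis (Fin n) ℝ (EuclideanSpace ℝ (Fin n))) :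
    Set (EuclideanSpace ℝ (Fin n)) :=
  ⋃ (v : (Submodule.span ℤ (Set.range ⇑b) : Set (EuclideanSpace ℝ (Fin n))))
    (w : (Submodule.span ℤ (Set.range ⇑b) : Set (EuclideanSpace ℝ (Fin n)))),
    {x | (v : EuclideanSpace ℝ (Fin n)) ≠ w ∧ dist x v = dist x w}

lemma badSet_null : volume (badSet b) = 0 := by
  have : Countable ((Submodule.span ℤ (Set.range ⇑b) : Set (EuclideanSpace ℝ (Fin n)))) :=
    (latt_countable b).to_subtype
  refine measure_iUnion_null fun v => measure_iUnion_null fun w => ?_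
  by_cases h : (v : EuclideanSpace ℝ (Fin n)) = w
  · convert measure_empty
    · ext x; simp [h]
    · infer_instance
  · refine measure_mono_null (fun x hx => ?_)
      (Measure.addHaar_affineSubspace volume (AffineSubspace.perpBisector (v : EuclideanSpace ℝ (Fin n)) w)
        (fun ht => h (AffineSubspace.perpBisector_eq_top.mp ht)))
    exact (AffineSubspace.mem_perpBisector_iff_dist_eq).mpr hx.2

lemma voro_cover : ∀ᵐ x : EuclideanSpace ℝ (Fin n) ∂volume,
    ∃ v ∈ ((Submodule.span ℤ (Set.range ⇑b)) : Set (EuclideanSpace ℝ (Fin n))),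
      -v +ᵥ x ∈ voro b := by
  have hB := badSet_null b
  filter_upwards [measure_eq_zero_iff_ae_notMem.mp hB] with x hx
  obtain ⟨v, hvL, hvcov, hvnear⟩ := exists_nearest b x
  refine ⟨v, hvL, fun u huL hu0 => ?_⟩
  have hle : dist x v ≤ dist x (v + u) := hvnear _ (add_mem hvL huL)
  have hne : dist x v ≠ dist x (v + u) := by
    intro heq
    refine hx ?_
    rw [badSet]
    refine Set.mem_iUnion.mpr ⟨⟨v, hvL⟩, Set.mem_iUnion.mpr ⟨⟨v + u, add_mem hvL huL⟩, ?_⟩⟩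
    exact ⟨by simpa using hu0, heq⟩
  have h3 : dist x v < dist x (v + u) := lt_of_le_of_ne hle hne
  simp only [vadd_eq_add, dist_eq_norm] at h3 ⊢
  rw [show -v + x - 0 = x - v from by abel, show -v + x - u = x - (v + u) from by abel]
  rw [show x - v = x - v from rfl]
  exact h3

lemma voro_isFD : IsAddFundamentalDomain (Submodule.span ℤ (Set.range ⇑b)) (voro b) volume := by
  refine ⟨(voro_measurable b).nullMeasurableSet, ?_, ?_⟩
  · filter_upwards [voro_cover b] with x hx
    obtain ⟨v, hvL, hv⟩ := hx
    exact ⟨⟨-v, neg_mem hvL⟩, hv⟩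
  · intro g h hgh
    refine Disjoint.aedisjoint ?_
    have hD := voro_disjoint b g.2 h.2 (fun e => hgh (Subtype.ext e))
    have e1 : (g +ᵥ voro b : Set (EuclideanSpace ℝ (Fin n))) = ((g : EuclideanSpace ℝ (Fin n)) +ᵥ voro b) := rfl
    have e2 : (h +ᵥ voro b : Set (EuclideanSpace ℝ (Fin n))) = ((h : EuclideanSpace ℝ (Fin n)) +ᵥ voro b) := rfl
    simpa [Function.onFun, e1, e2] using hD

lemma voro_volume : volume (voro b) = volume (ZSpan.fundamentalDomain b) := by
  have h1 : MeasurableVAdd (Submodule.span ℤ (Set.range ⇑b)) (EuclideanSpace ℝ (Fin n)) :=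
    (inferInstance : MeasurableVAdd (Submodule.span ℤ (Set.range ⇑b)).toAddSubgroup
      (EuclideanSpace ℝ (Fin n)))
  have h2 : VAddInvariantMeasure (Submodule.span ℤ (Set.range ⇑b)) (EuclideanSpace ℝ (Fin n)) volume :=
    (inferInstance : VAddInvariantMeasure (Submodule.span ℤ (Set.range ⇑b)).toAddSubgroup
      (EuclideanSpace ℝ (Fin n)) volume)
  have h3 : Countable (Submodule.span ℤ (Set.range ⇑b)) := (latt_countable b).to_subtype
  exact (voro_isFD b).measure_eq (ZSpan.isAddFundamentalDomain b volume)


lemma voro_volume' (b : Module.Basis (Fin n) ℝ (EuclideanSpace ℝ (Fin n))) :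
    volume (voro b) = ENNReal.ofReal (covDet b) := by
  rw [voro_volume b, volume_fd b]

lemma covDet_pos (b : Module.Basis (Fin n) ℝ (EuclideanSpace ℝ (Fin n))) : 0 < covDet b := by
  have h := ZSpan.measure_fundamentalDomain_ne_zero b (μ := volume)
  rw [volume_fd b] at h
  have h2 : ¬ covDet b ≤ 0 := fun hle => h (ENNReal.ofReal_eq_zero.mpr hle)
  linarith

end Aux

/-- If `L` is a full-rank lattice in ℝⁿ with covering radius `ν(L)` and `b > 2ν(L)`,
then `(b − 2ν(L))ⁿ / det(L) ≤ |L ∩ [0,b)ⁿ| ≤ (b + 2ν(L))ⁿ / det(L)`. -/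
theorem lattice_cube_count {n : ℕ} (hn : 0 < n)
    (b : Module.Basis (Fin n) ℝ (EuclideanSpace ℝ (Fin n)))
    (L : Submodule ℤ (EuclideanSpace ℝ (Fin n)))
    (hL : L = Submodule.span ℤ (Set.range b))
    (r : ℝ) (hr : r > 2 * covRad (L : Set (EuclideanSpace ℝ (Fin n)))) :
    (r - 2 * covRad (L : Set (EuclideanSpace ℝ (Fin n))))^n / covDet b
        ≤ (Nat.card ↥((L : Set (EuclideanSpace ℝ (Fin n))) ∩ cube n r) : ℝ) ∧
    (Nat.card ↥((L : Set (EuclideanSpace ℝ (Fin n))) ∩ cube n r) : ℝ)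
        ≤ (r + 2 * covRad (L : Set (EuclideanSpace ℝ (Fin n))))^n / covDet b := by
  subst hL
  set E := EuclideanSpace ℝ (Fin n)
  set Λ := Submodule.span ℤ (Set.range ⇑b) with hΛ
  set ν := covRad (Λ : Set E) with hν
  have hν0 : 0 ≤ ν := covRad_nonneg b
  have hr0 : 0 < r := lt_of_le_of_lt (by linarith) hr
  have hc : 0 < covDet b := covDet_pos b
  -- the cube is bounded
  have hbounded : IsBounded (cube n r) := by
    refine (isBounded_closedBall (x := (0 : E)) (r := Real.sqrt (n * r ^ 2))).subset ?_
    intro x hx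
    rw [mem_closedBall_zero_iff, EuclideanSpace.norm_eq]
    apply Real.sqrt_le_sqrt
    calc ∑ i, ‖x i‖ ^ 2 ≤ ∑ _i : Fin n, r ^ 2 := by
          refine Finset.sum_le_sum fun i _ => ?_
          rw [Real.norm_eq_abs, sq_abs]
          have := (hx i).1; have := (hx i).2
          nlinarith
      _ = n * r ^ 2 := by simp [Finset.sum_const, mul_comm]
  -- finiteness of the set of lattice points in the cube
  have hdisc : DiscreteTopology ((Λ : Set E) : Type _) := by
    exact (inferInstance : DiscreteTopology Λ)
  have hTfin : ((Λ : Set E) ∩ cube n r).Finite := by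
    rw [Set.inter_comm]
    exact Metric.finite_isBounded_inter_isClosed DiscreteTopology.isDiscrete hbounded (latt_closed b)
  set s := hTfin.toFinset with hs
  have hsmem : ∀ v, v ∈ s ↔ (v ∈ Λ ∧ v ∈ cube n r) := by
    intro v; rw [hs, Set.Finite.mem_toFinset]; rfl
  have hNcard : (Nat.card ↥((Λ : Set E) ∩ cube n r)) = s.card := by
    rw [Nat.card_coe_set_eq, Set.ncard_eq_toFinset_card _ hTfin]
  -- the union of translated Voronoi cells
  set U : Set E := ⋃ v ∈ s, v +ᵥ voro b with hU
  have hUvol : volume U = s.card * volume (voro b) := by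
    rw [hU, measure_biUnion_finset ?disj ?meas]
    · simp only [measure_vadd, Finset.sum_const, nsmul_eq_mul]
    case disj =>
      intro v hv w hw hvw
      exact voro_disjoint b ((hsmem v).1 (by simpa using hv)).1 ((hsmem w).1 (by simpa using hw)).1 hvw
    case meas =>
      intro v _
      exact (voro_measurable b).const_vadd v
  -- upper bound
  have hupper : volume U ≤ ENNReal.ofReal ((r + 2 * ν) ^ n) := by
    have hbox := volume_icoBox (n := n) (-ν) (r + ν) (by linarith)
    have : U ⊆ {x : E | ∀ i, -ν ≤ x i ∧ x i < r + ν} := by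
      intro x hx
      rw [hU, Set.mem_iUnion₂] at hx
      obtain ⟨v, hv, hxv⟩ := hx
      obtain ⟨hvΛ, hvcube⟩ := (hsmem v).1 hv
      rw [Set.mem_vadd_set_iff_neg_vadd_mem] at hxv
      have hd : ‖x - v‖ ≤ ν := by
        have := voro_dist_le b hxv
        rwa [dist_eq_norm, vadd_eq_add, show -v + x - 0 = x - v from by abel] at this
      intro i
      have hco : |x i - v i| ≤ ν := by
        have h1 := coord_abs_le_norm (x - v) i
        have h2 : (x - v) i = x i - v i := rfl
        rw [h2] at h1
        exact h1.trans hd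
      have h3 := abs_le.mp hco
      have h4 := (hvcube i).1; have h5 := (hvcube i).2
      constructor <;> [linarith [h3.1]; linarith [h3.2]]
    calc volume U ≤ volume {x : E | ∀ i, -ν ≤ x i ∧ x i < r + ν} := measure_mono this
      _ = ENNReal.ofReal ((r + ν - -ν) ^ n) := hbox
      _ = ENNReal.ofReal ((r + 2 * ν) ^ n) := by ring_nf
  -- lower bound
  have hlower : ENNReal.ofReal ((r - 2 * ν) ^ n) ≤ volume U := by
    have hbox := volume_icoBox (n := n) ν (r - ν) (by linarith)
    have hae : {x : E | ∀ i, ν ≤ x i ∧ x i < r - ν} ≤ᵐ[volume] U := by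
      filter_upwards [voro_cover b] with x hx hxI
      obtain ⟨v, hvΛ, hv⟩ := hx
      have hd : ‖x - v‖ ≤ ν := by
        have := voro_dist_le b hv
        rwa [dist_eq_norm, vadd_eq_add, show -v + x - 0 = x - v from by abel] at this
      have hvcube : v ∈ cube n r := by
        intro i
        have hco : |x i - v i| ≤ ν := by
          have h1 := coord_abs_le_norm (x - v) i
          have h2 : (x - v) i = x i - v i := rfl
          rw [h2] at h1
          exact h1.trans hd
        have h3 := abs_le.mp hco
        have h4 := (hxI i).1; have h5 := (hxI i).2
        constructor <;> [linarith [h3.2]; linarith [h3.1]]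
      exact Set.mem_biUnion ((hsmem v).2 ⟨hvΛ, hvcube⟩)
        (Set.mem_vadd_set_iff_neg_vadd_mem.mpr hv)
    calc ENNReal.ofReal ((r - 2 * ν) ^ n) = ENNReal.ofReal ((r - ν - ν) ^ n) := by ring_nf
      _ = volume {x : E | ∀ i, ν ≤ x i ∧ x i < r - ν} := hbox.symm
      _ ≤ volume U := measure_mono_ae hae
  -- put it together
  rw [hUvol, voro_volume' b] at hupper hlower
  have hmul : (s.card : ENNReal) * ENNReal.ofReal (covDet b)
      = ENNReal.ofReal (s.card * covDet b) := by
    rw [ENNReal.ofReal_mul (Nat.cast_nonneg _), ENNReal.ofReal_natCast]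
  rw [hmul] at hupper hlower
  have hup' : (s.card : ℝ) * covDet b ≤ (r + 2 * ν) ^ n :=
    (ENNReal.ofReal_le_ofReal_iff (pow_nonneg (by linarith) n)).mp hupper
  have hlo' : (r - 2 * ν) ^ n ≤ (s.card : ℝ) * covDet b :=
    (ENNReal.ofReal_le_ofReal_iff (mul_nonneg (Nat.cast_nonneg _) hc.le)).mp hlower
  rw [hNcard]
  constructor
  · rw [div_le_iff₀ hc]; exact hlo'
  · rw [le_div_iff₀ hc]; exact hup'
end

section
/- Let L = ℤv be a one-dimensional lattice with v > 0, and let b ≥ 3v + 1. Then two elements chosen independently and uniformly at random from L ∩ [0, b) generate L with probability greater than 3³/(π²·2³) > 1/3. -/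
open Finset Real

section aux_one_dim

private lemma odl_tail_sum (j : ℕ) : ∑ k ∈ Icc 8 (7+j), (1:ℝ)/(k:ℝ)^2 ≤ 1/7 - 1/(7+j) := by
  induction j with
  | zero => simp
  | succ j ih =>
      have h : (7:ℕ) + (j+1) = (7+j) + 1 := by omega
      rw [h, Finset.sum_Icc_succ_top (by omega)]
      have hj : (0:ℝ) < (7+j:ℝ) := by positivity
      have h1 : (1:ℝ)/((7+j)+1:ℕ)^2 ≤ 1/((7+j):ℝ) - 1/(((7+j):ℝ)+1) := by
        rw [div_sub_div _ _ (by positivity) (by positivity)]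
        rw [div_le_div_iff₀ (by positivity) (by positivity)]
        push_cast
        nlinarith [hj]
      push_cast at h1 ⊢
      have e : (7 + ((j:ℝ)+1)) = 7 + (j:ℝ) + 1 := by ring
      rw [e]
      linarith

private lemma odl_tail_sum' (m : ℕ) : ∑ k ∈ Icc 8 m, (1:ℝ)/(k:ℝ)^2 ≤ 1/7 := by
  rcases le_or_gt m 7 with h | h
  · rw [Finset.Icc_eq_empty (by omega)]; norm_num
  · have h8 : m = 7 + (m - 7) := by omega
    rw [h8]
    have h0 : (0:ℝ) < (7 + ((m-7:ℕ):ℝ)) := by positivity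
    have := odl_tail_sum (m - 7)
    nlinarith [div_pos (by norm_num : (0:ℝ)<1) h0]

private lemma odl_prime_sum (m : ℕ) :
    ∑ p ∈ (Icc 1 m).filter Nat.Prime, (1:ℝ)/(p:ℝ)^2 ≤ 24889/44100 := by
  have hsub : (Icc 1 m).filter Nat.Prime ⊆ ({2,3,5,7} : Finset ℕ) ∪ Icc 8 m := by
    intro p hp
    simp only [mem_filter, mem_Icc] at hp
    obtain ⟨⟨h1, h2⟩, hpr⟩ := hp
    simp only [mem_union, mem_insert, mem_singleton, mem_Icc]
    rcases le_or_gt p 7 with h | h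
    · left; interval_cases p <;> revert hpr <;> decide
    · right; omega
  have h1 : ∑ p ∈ (Icc 1 m).filter Nat.Prime, (1:ℝ)/(p:ℝ)^2
      ≤ ∑ p ∈ ({2,3,5,7} : Finset ℕ) ∪ Icc 8 m, (1:ℝ)/(p:ℝ)^2 :=
    Finset.sum_le_sum_of_subset_of_nonneg hsub (fun i _ _ => by positivity)
  have hdisj : Disjoint ({2,3,5,7} : Finset ℕ) (Icc 8 m) := by
    simp [Finset.disjoint_left, Finset.mem_Icc]
  rw [Finset.sum_union hdisj] at h1
  have h2 := odl_tail_sum' m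
  have h3 : ∑ p ∈ ({2,3,5,7} : Finset ℕ), (1:ℝ)/(p:ℝ)^2 = 1/4+1/9+1/25+1/49 := by
    norm_num
  linarith

private lemma odl_bad_card (m : ℕ) :
    (((Icc 1 m ×ˢ Icc 1 m).filter (fun p : ℕ×ℕ => Nat.gcd p.1 p.2 ≠ 1)).card : ℝ)
      ≤ (m:ℝ)^2 * (24889/44100) := by
  set P := (Icc 1 m).filter Nat.Prime with hP
  have hsub : (Icc 1 m ×ˢ Icc 1 m).filter (fun p : ℕ×ℕ => Nat.gcd p.1 p.2 ≠ 1)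
      ⊆ P.biUnion (fun p => (Icc 1 m).filter (p ∣ ·) ×ˢ (Icc 1 m).filter (p ∣ ·)) := by
    intro q hq
    simp only [mem_filter, mem_product, mem_Icc] at hq
    obtain ⟨⟨⟨hq11, hq12⟩, hq21, hq22⟩, hg⟩ := hq
    obtain ⟨p, hpr, hpd⟩ := Nat.exists_prime_and_dvd hg
    have hd1 : p ∣ q.1 := hpd.trans (Nat.gcd_dvd_left _ _)
    have hd2 : p ∣ q.2 := hpd.trans (Nat.gcd_dvd_right _ _)
    have hpm : p ≤ m := le_trans (Nat.le_of_dvd (by omega) hd1) hq12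
    simp only [mem_biUnion, mem_filter, mem_product, mem_Icc, hP]
    exact ⟨p, ⟨⟨hpr.one_lt.le.trans' (by omega), hpm⟩, hpr⟩,
      ⟨⟨⟨hq11, hq12⟩, hd1⟩, ⟨hq21, hq22⟩, hd2⟩⟩
  have hc1 : ((Icc 1 m ×ˢ Icc 1 m).filter (fun p : ℕ×ℕ => Nat.gcd p.1 p.2 ≠ 1)).card
      ≤ ∑ p ∈ P, (m / p) * (m / p) := by
    refine le_trans (card_le_card hsub) (le_trans card_biUnion_le (le_of_eq ?_))
    refine Finset.sum_congr rfl (fun p _ => ?_)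
    rw [show ((Icc 1 m).filter (p ∣ ·) ×ˢ (Icc 1 m).filter (p ∣ ·)).card
        = ((Icc 1 m).filter (p ∣ ·)).card * ((Icc 1 m).filter (p ∣ ·)).card from card_product _ _]
    rw [show Icc 1 m = Ioc 0 m from Finset.Icc_add_one_left_eq_Ioc 0 m, Nat.Ioc_filter_dvd_card_eq_div]
  have hc2 : (∑ p ∈ P, ((m / p) * (m / p) : ℕ) : ℝ) ≤ (m:ℝ)^2 * ∑ p ∈ P, (1:ℝ)/(p:ℝ)^2 := by
    push_cast
    rw [Finset.mul_sum]
    refine Finset.sum_le_sum (fun p hp => ?_)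
    have hp0 : 0 < p := (Nat.Prime.pos (mem_filter.mp hp).2)
    have h1 : ((m / p : ℕ) : ℝ) ≤ (m:ℝ)/(p:ℝ) := Nat.cast_div_le
    have h2 : (0:ℝ) ≤ ((m / p : ℕ) : ℝ) := by positivity
    have h3 : (m:ℝ)^2 * (1/(p:ℝ)^2) = ((m:ℝ)/p) * ((m:ℝ)/p) := by ring
    rw [h3]
    exact mul_le_mul h1 h1 h2 (by positivity)
  have hps := odl_prime_sum m
  have hm2 : (0:ℝ) ≤ (m:ℝ)^2 := by positivity
  calc (((Icc 1 m ×ˢ Icc 1 m).filter (fun p : ℕ×ℕ => Nat.gcd p.1 p.2 ≠ 1)).card : ℝ)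
      ≤ (∑ p ∈ P, ((m / p) * (m / p) : ℕ) : ℝ) := by exact_mod_cast hc1
    _ ≤ (m:ℝ)^2 * ∑ p ∈ P, (1:ℝ)/(p:ℝ)^2 := hc2
    _ ≤ (m:ℝ)^2 * (24889/44100) := mul_le_mul_of_nonneg_left hps hm2

private lemma odl_coprime_count (m : ℕ) (hm : 3 ≤ m) :
    (27 / (8 * Real.pi^2)) * ((m:ℝ)+1)^2 <
    (((range (m+1) ×ˢ range (m+1)).filter (fun p : ℕ×ℕ => Nat.gcd p.1 p.2 = 1)).card : ℝ) := by
  set C := (Icc 1 m ×ˢ Icc 1 m).filter (fun p : ℕ×ℕ => Nat.gcd p.1 p.2 = 1) with hC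
  set B := (Icc 1 m ×ˢ Icc 1 m).filter (fun p : ℕ×ℕ => Nat.gcd p.1 p.2 ≠ 1) with hB
  set G := (range (m+1) ×ˢ range (m+1)).filter (fun p : ℕ×ℕ => Nat.gcd p.1 p.2 = 1) with hG
  have hCB : C.card + B.card = m * m := by
    rw [hC, hB, Finset.card_filter_add_card_filter_not, card_product, Nat.card_Icc]
    simp
  have hsub : insert ((0:ℕ),(1:ℕ)) (insert (1,0) C) ⊆ G := by
    intro q hq
    simp only [mem_insert] at hq
    simp only [hG, mem_filter, mem_product, mem_range]
    rcases hq with rfl | rfl | hq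
    · exact ⟨⟨by omega, by omega⟩, by simp⟩
    · exact ⟨⟨by omega, by omega⟩, by simp⟩
    · simp only [hC, mem_filter, mem_product, mem_Icc] at hq
      exact ⟨⟨by omega, by omega⟩, hq.2⟩
  have hnm1 : ((1:ℕ),(0:ℕ)) ∉ C := by
    simp [hC, Finset.mem_filter, Finset.mem_product]
  have hnm0 : ((0:ℕ),(1:ℕ)) ∉ insert ((1:ℕ),(0:ℕ)) C := by
    simp [hC, Finset.mem_filter, Finset.mem_product]
  have hcard : C.card + 2 ≤ G.card := by
    have := Finset.card_le_card hsub
    rwa [Finset.card_insert_of_notMem hnm0, Finset.card_insert_of_notMem hnm1] at this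
  have hBr := odl_bad_card m
  have hc : (C.card:ℝ) + (B.card:ℝ) = (m:ℝ)*(m:ℝ) := by exact_mod_cast hCB
  have hcard' : (C.card:ℝ) + 2 ≤ (G.card:ℝ) := by exact_mod_cast hcard
  have hsq : (m:ℝ)*(m:ℝ) = (m:ℝ)^2 := by ring
  have hGlow : (19211/44100) * (m:ℝ)^2 + 2 ≤ (G.card:ℝ) := by nlinarith
  have hπ : (3.141592:ℝ) < Real.pi := Real.pi_gt_d6
  have hx : (3:ℝ) ≤ (m:ℝ) := by exact_mod_cast hm
  have hπ0 : (0:ℝ) < Real.pi := Real.pi_pos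
  have h9 : (9.8696:ℝ) < Real.pi^2 := by nlinarith
  rw [div_mul_eq_mul_div, div_lt_iff₀ (by positivity)]
  have hpos : (0:ℝ) < (19211/44100) * (m:ℝ)^2 + 2 := by positivity
  nlinarith [sq_nonneg ((m:ℝ) - 3.66), mul_lt_mul_of_pos_left h9 hpos,
    mul_le_mul_of_nonneg_right hGlow (le_of_lt (by positivity : (0:ℝ) < 8*Real.pi^2))]

private lemma odl_closure_pair (v : ℝ) (hv : 0 < v) (k l : ℕ) :
    AddSubgroup.closure {(k:ℝ)*v, (l:ℝ)*v} = AddSubgroup.zmultiples v ↔ Nat.gcd k l = 1 := by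
  have hvne : v ≠ 0 := ne_of_gt hv
  constructor
  · intro h
    set g := Nat.gcd k l with hg
    have hvmem : v ∈ AddSubgroup.closure ({(k:ℝ)*v, (l:ℝ)*v} : Set ℝ) := by
      rw [h]; exact AddSubgroup.mem_zmultiples v
    have hle : AddSubgroup.closure ({(k:ℝ)*v, (l:ℝ)*v} : Set ℝ)
        ≤ AddSubgroup.zmultiples ((g:ℝ)*v) := by
      rw [AddSubgroup.closure_le]
      intro x hx
      rcases hx with rfl | hx
      · rw [SetLike.mem_coe, AddSubgroup.mem_zmultiples_iff]
        exact ⟨(k/g : ℕ), by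
          rw [zsmul_eq_mul, ← mul_assoc]
          norm_cast
          rw [Nat.div_mul_cancel (Nat.gcd_dvd_left k l)]⟩
      · rcases hx with rfl
        rw [SetLike.mem_coe, AddSubgroup.mem_zmultiples_iff]
        exact ⟨(l/g : ℕ), by
          rw [zsmul_eq_mul, ← mul_assoc]
          norm_cast
          rw [Nat.div_mul_cancel (Nat.gcd_dvd_right k l)]⟩
    have hv2 := hle hvmem
    rw [AddSubgroup.mem_zmultiples_iff] at hv2
    obtain ⟨c, hc⟩ := hv2
    rw [zsmul_eq_mul] at hc
    have hcg : ((c:ℝ) * (g:ℝ)) * v = 1 * v := by linear_combination hc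
    have hcg1 : (c:ℝ) * (g:ℝ) = 1 := mul_right_cancel₀ hvne hcg
    have hcgz : c * (g:ℤ) = 1 := by exact_mod_cast hcg1
    have hdvd : (g:ℤ) ∣ 1 := Dvd.intro c (by linarith)
    have : g ∣ 1 := by exact_mod_cast hdvd
    exact Nat.dvd_one.mp this
  · intro h
    apply le_antisymm
    · rw [AddSubgroup.closure_le]
      intro x hx
      rcases hx with rfl | hx
      · rw [SetLike.mem_coe, AddSubgroup.mem_zmultiples_iff]
        exact ⟨(k:ℤ), by rw [zsmul_eq_mul]; push_cast; ring⟩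
      · rcases hx with rfl
        rw [SetLike.mem_coe, AddSubgroup.mem_zmultiples_iff]
        exact ⟨(l:ℤ), by rw [zsmul_eq_mul]; push_cast; ring⟩
    · rw [AddSubgroup.zmultiples_le]
      have hbez : ((k:ℤ).gcdA (l:ℤ)) * (k:ℤ) + ((k:ℤ).gcdB (l:ℤ)) * (l:ℤ) = 1 := by
        have h2 := Int.gcd_eq_gcd_ab (k:ℤ) (l:ℤ)
        have hgn : Int.gcd (k:ℤ) (l:ℤ) = 1 := by rwa [Int.gcd_natCast_natCast]
        rw [hgn] at h2
        push_cast at h2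
        linarith
      have hvrep : v = ((k:ℤ).gcdA (l:ℤ)) • ((k:ℝ)*v) + ((k:ℤ).gcdB (l:ℤ)) • ((l:ℝ)*v) := by
        rw [zsmul_eq_mul, zsmul_eq_mul]
        have hb : (((k:ℤ).gcdA (l:ℤ) : ℝ)) * (k:ℝ) + (((k:ℤ).gcdB (l:ℤ) : ℝ)) * (l:ℝ) = 1 := by
          exact_mod_cast hbez
        linear_combination (-v) * hb
      have m1 : (k:ℝ)*v ∈ AddSubgroup.closure ({(k:ℝ)*v, (l:ℝ)*v} : Set ℝ) :=
        AddSubgroup.subset_closure (Set.mem_insert _ _)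
      have m2 : (l:ℝ)*v ∈ AddSubgroup.closure ({(k:ℝ)*v, (l:ℝ)*v} : Set ℝ) :=
        AddSubgroup.subset_closure (Set.mem_insert_of_mem _ rfl)
      have final := AddSubgroup.add_mem _ (AddSubgroup.zsmul_mem _ m1 ((k:ℤ).gcdA (l:ℤ)))
        (AddSubgroup.zsmul_mem _ m2 ((k:ℤ).gcdB (l:ℤ)))
      rwa [← hvrep] at final

end aux_one_dim

/-- Let `L = ℤv` with `v > 0` and `b ≥ 3v + 1`. Then among all pairs of elements of
`L ∩ [0,b)`, the fraction of pairs generating `L` is greater than `3³/(π²·2³) > 1/3`. -/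
theorem one_dim_lattice_generation (v r : ℝ) (hv : 0 < v) (hr : r ≥ 3 * v + 1)
    (L : Set ℝ) (hL : L = {x : ℝ | ∃ k : ℤ, x = k * v})
    (F : Set ℝ) (hF : F = {x ∈ L | 0 ≤ x ∧ x < r}) :
    ((Nat.card {x : ℝ × ℝ // x.1 ∈ F ∧ x.2 ∈ F ∧
          AddSubgroup.closure {x.1, x.2} = AddSubgroup.zmultiples v} : ℝ)
        > (3^3 / (Real.pi^2 * 2^3))
          * (Nat.card {x : ℝ × ℝ // x.1 ∈ F ∧ x.2 ∈ F} : ℝ)) ∧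
    ((3:ℝ)^3 / (Real.pi^2 * 2^3) > 1/3) := by
  have hvne : v ≠ 0 := ne_of_gt hv
  have hπ0 : (0:ℝ) < Real.pi := Real.pi_pos
  constructor
  · -- main inequality
    set N : ℤ := ⌈r / v⌉ with hN
    have hrv : (3:ℝ) < r / v := by
      rw [lt_div_iff₀ hv]; nlinarith
    have hN4 : 4 ≤ N := by
      have : (3:ℤ) < N := by
        rw [hN]
        exact_mod_cast (Int.lt_ceil).mpr (by exact_mod_cast hrv)
      omega
    obtain ⟨n, hn4, hNn⟩ : ∃ n : ℕ, 4 ≤ n ∧ (n:ℤ) = N :=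
      ⟨N.toNat, by omega, Int.toNat_of_nonneg (by omega)⟩
    -- membership characterization
    have hmem : ∀ x : ℝ, x ∈ F ↔ ∃ k : ℕ, k < n ∧ x = (k:ℝ) * v := by
      intro x
      rw [hF, hL]
      simp only [Set.mem_setOf_eq]
      constructor
      · rintro ⟨⟨k, rfl⟩, hx0, hxr⟩
        have hk0 : 0 ≤ k := by
          by_contra hk
          push_neg at hk
          have : (k:ℝ) < 0 := by exact_mod_cast hk
          nlinarith
        have hkN : k < N := by
          rw [hN]
          apply Int.lt_ceil.mpr
          rw [lt_div_iff₀ hv]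
          exact hxr
        refine ⟨k.toNat, by omega, ?_⟩
        have e : ((k.toNat : ℕ) : ℝ) = ((k : ℤ) : ℝ) := by
          exact_mod_cast Int.toNat_of_nonneg hk0
        rw [e]
      · rintro ⟨k, hk, rfl⟩
        refine ⟨⟨(k:ℤ), by push_cast; ring⟩, by positivity, ?_⟩
        have hkN : ((k:ℤ) : ℝ) < r / v := by
          apply Int.lt_ceil.mp
          rw [← hN]
          omega
        rw [lt_div_iff₀ hv] at hkN
        push_cast at hkN ⊢
        exact hkN
    set f : ℕ × ℕ → ℝ × ℝ := fun p => ((p.1:ℝ)*v, (p.2:ℝ)*v) with hf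
    have hfinj : Function.Injective f := by
      intro p q hpq
      rw [hf, Prod.ext_iff] at hpq
      obtain ⟨h1, h2⟩ := hpq
      have e1 : (p.1:ℝ) = q.1 := mul_right_cancel₀ hvne h1
      have e2 : (p.2:ℝ) = q.2 := mul_right_cancel₀ hvne h2
      exact Prod.ext (by exact_mod_cast e1) (by exact_mod_cast e2)
    -- the total set
    have hA : {x : ℝ × ℝ | x.1 ∈ F ∧ x.2 ∈ F}
        = f '' ((range n ×ˢ range n : Finset (ℕ×ℕ)) : Set (ℕ×ℕ)) := by
      ext x
      simp only [Set.mem_setOf_eq, Set.mem_image, Finset.mem_coe, Finset.mem_product,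
        Finset.mem_range, hmem]
      constructor
      · rintro ⟨⟨k1, hk1, hx1⟩, k2, hk2, hx2⟩
        exact ⟨(k1, k2), ⟨hk1, hk2⟩, by rw [hf]; exact Prod.ext hx1.symm hx2.symm⟩
      · rintro ⟨p, ⟨hp1, hp2⟩, rfl⟩
        exact ⟨⟨p.1, hp1, rfl⟩, ⟨p.2, hp2, rfl⟩⟩
    -- the good set
    have hAg : {x : ℝ × ℝ | x.1 ∈ F ∧ x.2 ∈ F ∧
          AddSubgroup.closure {x.1, x.2} = AddSubgroup.zmultiples v}
        = f '' (((range n ×ˢ range n).filter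
            (fun p : ℕ×ℕ => Nat.gcd p.1 p.2 = 1) : Finset (ℕ×ℕ)) : Set (ℕ×ℕ)) := by
      ext x
      simp only [Set.mem_setOf_eq, Set.mem_image, Finset.mem_coe, Finset.mem_filter,
        Finset.mem_product, Finset.mem_range, hmem]
      constructor
      · rintro ⟨⟨k1, hk1, hx1⟩, ⟨k2, hk2, hx2⟩, hcl⟩
        refine ⟨(k1, k2), ⟨⟨hk1, hk2⟩, ?_⟩, by rw [hf]; exact Prod.ext hx1.symm hx2.symm⟩
        rw [← odl_closure_pair v hv k1 k2, ← hx1, ← hx2]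
        exact hcl
      · rintro ⟨p, ⟨⟨hp1, hp2⟩, hg⟩, rfl⟩
        refine ⟨⟨p.1, hp1, rfl⟩, ⟨p.2, hp2, rfl⟩, ?_⟩
        exact (odl_closure_pair v hv p.1 p.2).mpr hg
    -- card computations
    have hcardA : Nat.card {x : ℝ × ℝ // x.1 ∈ F ∧ x.2 ∈ F} = n * n := by
      have : Nat.card {x : ℝ × ℝ // x.1 ∈ F ∧ x.2 ∈ F}
          = ({x : ℝ × ℝ | x.1 ∈ F ∧ x.2 ∈ F}).ncard := Nat.card_coe_set_eq _
      rw [this, hA, Set.ncard_image_of_injective _ hfinj, Set.ncard_coe_finset,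
        card_product, card_range]
    have hcardG : Nat.card {x : ℝ × ℝ // x.1 ∈ F ∧ x.2 ∈ F ∧
          AddSubgroup.closure {x.1, x.2} = AddSubgroup.zmultiples v}
        = ((range n ×ˢ range n).filter (fun p : ℕ×ℕ => Nat.gcd p.1 p.2 = 1)).card := by
      have : Nat.card {x : ℝ × ℝ // x.1 ∈ F ∧ x.2 ∈ F ∧
            AddSubgroup.closure {x.1, x.2} = AddSubgroup.zmultiples v}
          = ({x : ℝ × ℝ | x.1 ∈ F ∧ x.2 ∈ F ∧
            AddSubgroup.closure {x.1, x.2} = AddSubgroup.zmultiples v}).ncard :=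
        Nat.card_coe_set_eq _
      rw [this, hAg, Set.ncard_image_of_injective _ hfinj, Set.ncard_coe_finset]
    rw [hcardA, hcardG]
    obtain ⟨m, rfl⟩ : ∃ m, n = m + 1 := ⟨n - 1, by omega⟩
    have hm3 : 3 ≤ m := by omega
    have := odl_coprime_count m hm3
    have hconst : (3:ℝ)^3 / (Real.pi^2 * 2^3) = 27 / (8 * Real.pi^2) := by ring
    rw [gt_iff_lt, hconst]
    have hcast : ((m+1) * (m+1) : ℕ) = (((m:ℝ)+1)^2 : ℝ) := by push_cast; ring
    rw [hcast]
    exact this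
  · -- 27/(8π²) > 1/3
    have hπ : Real.pi < 3.15 := Real.pi_lt_d2
    rw [gt_iff_lt, div_lt_div_iff₀ (by norm_num) (by positivity)]
    nlinarith [Real.pi_pos]
end

section
/- Let a₁,…,a_k be a generating set of a lattice L ⊆ ℝⁿ, let a′₁,…,a′_k ∈ ℝⁿ satisfy ‖a′_j − a_j‖₂ ≤ ε, let μ ≤ λ₁(L), and let z ∈ ℤᵏ be nonzero with 2ε‖z‖₁ < μ. Then ∑_j z_j a_j = 0 if and only if ‖∑_j z_j a′_j‖₂ ≤ ε‖z‖₁. -/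
/-- Sufficient and necessary condition for relations: if `a₁,…,a_k` generate the
lattice `L`, `‖a′_j − a_j‖ ≤ ε`, `μ ≤ λ₁(L)` and `z ∈ ℤᵏ` is nonzero with
`2ε‖z‖₁ < μ`, then `∑ z_j a_j = 0` iff `‖∑ z_j a′_j‖ ≤ ε‖z‖₁`. -/
theorem relation_characterization {n k : ℕ}
    (a a' : Fin k → EuclideanSpace ℝ (Fin n)) (ε μ : ℝ)
    (L : Submodule ℤ (EuclideanSpace ℝ (Fin n)))
    (hL : L = Submodule.span ℤ (Set.range a))
    (herr : ∀ j, ‖a' j - a j‖ ≤ ε)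
    (hμ : ∀ v : EuclideanSpace ℝ (Fin n), v ∈ L → v ≠ 0 → μ ≤ ‖v‖)
    (z : Fin k → ℤ) (hz : z ≠ 0)
    (hzμ : 2 * ε * (∑ j, |(z j : ℝ)|) < μ) :
    (∑ j, (z j : ℝ) • a j) = 0 ↔
      ‖∑ j, (z j : ℝ) • a' j‖ ≤ ε * ∑ j, |(z j : ℝ)| := by
  set S := ∑ j, (z j : ℝ) • a j with hS
  set S' := ∑ j, (z j : ℝ) • a' j with hS'
  have hdiff : ‖S' - S‖ ≤ ε * ∑ j, |(z j : ℝ)| := by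
    have : S' - S = ∑ j, (z j : ℝ) • (a' j - a j) := by
      rw [hS, hS', ← Finset.sum_sub_distrib]
      congr 1; ext j; rw [smul_sub]
    rw [this]
    calc ‖∑ j, (z j : ℝ) • (a' j - a j)‖ ≤ ∑ j, ‖(z j : ℝ) • (a' j - a j)‖ :=
          norm_sum_le _ _
      _ ≤ ∑ j, |(z j : ℝ)| * ε := by
          apply Finset.sum_le_sum
          intro j _
          rw [norm_smul, Real.norm_eq_abs]
          exact mul_le_mul_of_nonneg_left (herr j) (abs_nonneg _)
      _ = ε * ∑ j, |(z j : ℝ)| := by rw [← Finset.sum_mul, mul_comm]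
  constructor
  · intro h
    have : ‖S'‖ = ‖S' - S‖ := by rw [h, sub_zero]
    rw [this]; exact hdiff
  · intro h
    by_contra hS0
    have hmem : S ∈ L := by
      rw [hL]
      apply Submodule.sum_mem
      intro j _
      have : (z j : ℝ) • a j = (z j) • a j := by
        simp [Int.cast_smul_eq_zsmul]
      rw [this]
      exact Submodule.smul_mem _ _ (Submodule.subset_span ⟨j, rfl⟩)
    have hμS := hμ S hmem hS0
    have hSle : ‖S‖ ≤ 2 * ε * ∑ j, |(z j : ℝ)| := by
      calc ‖S‖ = ‖(S - S') + S'‖ := by rw [sub_add_cancel]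
        _ ≤ ‖S - S'‖ + ‖S'‖ := norm_add_le _ _
        _ ≤ ε * (∑ j, |(z j : ℝ)|) + ε * (∑ j, |(z j : ℝ)|) := by
            rw [norm_sub_rev]; exact add_le_add hdiff h
        _ = 2 * ε * ∑ j, |(z j : ℝ)| := by ring
    linarith
end

section
/- Let L ⊆ ℝⁿ be a lattice of rank r generated by a₁,…,a_k with ‖a_j‖₂ ≤ α for all j. Then there exist k − r linearly independent relations m₁,…,m_{k−r} ∈ ℤᵏ (i.e., ∑_i (m_j)_i a_i = 0) with ‖m_j‖_∞ ≤ αʳ/det(L). -/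
open scoped RealInnerProductSpace

open Finset Matrix

open InnerProductSpace

instance wfltFin {r : ℕ} : WellFoundedLT (Fin r) := inferInstance

variable {E : Type*} [NormedAddCommGroup E] [InnerProductSpace ℝ E]

lemma gram_det_eq {r : ℕ} (v : Fin r → E) :
    (Matrix.of fun i j => ⟪v i, v j⟫).det = ∏ i : Fin r, ‖gramSchmidt ℝ v i‖ ^ 2 := by
  classical
  set u := gramSchmidt ℝ v with hu
  set R : Matrix (Fin r) (Fin r) ℝ := Matrix.of fun i j =>
    if i = j then 1 else if i < j then ⟪u i, v j⟫ / (‖u i‖ : ℝ) ^ 2 else 0 with hR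
  have hvj : ∀ j, v j = ∑ i, R i j • u i := by
    intro j
    have hErase : ∑ i ∈ Iio j, R i j • u i = ∑ i ∈ (univ.erase j), R i j • u i := by
      refine Finset.sum_subset ?_ ?_
      · intro i hi
        exact Finset.mem_erase.2 ⟨ne_of_lt (Finset.mem_Iio.1 hi), mem_univ i⟩
      · intro i hi hni
        have h1 : i ≠ j := (Finset.mem_erase.1 hi).1
        have h2 : ¬ i < j := fun h => hni (Finset.mem_Iio.2 h)
        have : R i j = 0 := by simp only [hR, Matrix.of_apply, if_neg h1, if_neg h2]
        rw [this, zero_smul]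
    have hsplit : ∑ i, R i j • u i = R j j • u j + ∑ i ∈ (univ.erase j), R i j • u i :=
      (Finset.add_sum_erase _ _ (mem_univ j)).symm
    have hRjj : R j j = 1 := by simp [hR]
    rw [hsplit, ← hErase, hRjj, one_smul]
    have hdef := gramSchmidt_def'' ℝ v j
    rw [← hu] at hdef
    convert hdef using 2
    refine Finset.sum_congr rfl ?_
    intro i hi
    have hij : i ≠ j := ne_of_lt (Finset.mem_Iio.1 hi)
    simp [hR, if_neg hij, Finset.mem_Iio.1 hi]
  have hGu : (Matrix.of fun i j => ⟪u i, u j⟫ : Matrix (Fin r) (Fin r) ℝ)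
      = Matrix.diagonal fun i => ‖u i‖ ^ 2 := by
    ext i j
    by_cases hij : i = j
    · subst hij; simp [real_inner_self_eq_norm_sq]
    · simp [hu, Matrix.diagonal_apply_ne _ hij, gramSchmidt_orthogonal ℝ v hij]
  have hfact : (Matrix.of fun i j => ⟪v i, v j⟫ : Matrix (Fin r) (Fin r) ℝ)
      = Rᵀ * (Matrix.of fun i j => ⟪u i, u j⟫) * R := by
    ext i j
    simp only [Matrix.mul_apply, Matrix.transpose_apply, Matrix.of_apply]
    rw [hvj i, hvj j, sum_inner]
    simp only [real_inner_smul_left, inner_sum, real_inner_smul_right, Finset.mul_sum,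
      Finset.sum_mul]
    rw [Finset.sum_comm]
    exact Finset.sum_congr rfl fun t _ => Finset.sum_congr rfl fun s _ => by ring
  have hRtri : R.BlockTriangular id := by
    intro i j hij
    have h1 : i ≠ j := ne_of_gt hij
    have h2 : ¬ i < j := not_lt_of_gt hij
    simp only [hR, Matrix.of_apply, if_neg h1, if_neg h2]
  have hdetR : R.det = 1 := by
    rw [Matrix.det_of_upperTriangular hRtri]
    exact Finset.prod_eq_one fun i _ => by simp [hR]
  rw [hfact, Matrix.det_mul, Matrix.det_mul, Matrix.det_transpose, hdetR, mul_one, one_mul,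
    hGu, Matrix.det_diagonal]

lemma norm_gramSchmidt_le {r : ℕ} (v : Fin r → E) (i : Fin r) :
    ‖gramSchmidt ℝ v i‖ ≤ ‖v i‖ := by
  classical
  set u := gramSchmidt ℝ v with hu
  set p : E := ∑ t ∈ Iio i, (⟪u t, v i⟫ / (‖u t‖ : ℝ) ^ 2) • u t with hp
  have hvi : v i = u i + p := by
    have := gramSchmidt_def'' ℝ v i
    rw [← hu] at this
    exact this
  have horth : ⟪u i, p⟫ = 0 := by
    rw [hp, inner_sum]
    refine Finset.sum_eq_zero fun t ht => ?_
    have hti : i ≠ t := (ne_of_gt (Finset.mem_Iio.1 ht))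
    rw [real_inner_smul_right, gramSchmidt_orthogonal ℝ v hti, mul_zero]
  have hsq : ‖v i‖ ^ 2 = ‖u i‖ ^ 2 + ‖p‖ ^ 2 := by
    rw [hvi, norm_add_sq_real, horth]
    ring
  nlinarith [norm_nonneg (v i), norm_nonneg (u i), norm_nonneg p, sq_nonneg ‖p‖]

lemma sqrt_gram_det_le {r : ℕ} (v : Fin r → E) :
    Real.sqrt (Matrix.of fun i j => ⟪v i, v j⟫).det ≤ ∏ i : Fin r, ‖v i‖ := by
  rw [gram_det_eq, Finset.prod_pow,
    Real.sqrt_sq (Finset.prod_nonneg fun i _ => norm_nonneg _)]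
  exact Finset.prod_le_prod (fun i _ => norm_nonneg _) fun i _ => norm_gramSchmidt_le v i

lemma gram_det_pos {r : ℕ} {v : Fin r → E} (hv : LinearIndependent ℝ v) :
    0 < (Matrix.of fun i j => ⟪v i, v j⟫).det := by
  rw [gram_det_eq]
  exact Finset.prod_pos fun i _ =>
    pow_pos (norm_pos_iff.2 (gramSchmidt_ne_zero i hv)) 2

lemma det_mul_sqrt_le {n k r : ℕ} (a : Fin k → EuclideanSpace ℝ (Fin n))
    (c : Fin r → EuclideanSpace ℝ (Fin n)) (Bm : Matrix (Fin r) (Fin k) ℤ)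
    (hBa : ∀ i, a i = ∑ t : Fin r, (Bm t i : ℝ) • c t) (h : Fin r → Fin k) :
    |(((Bm.submatrix id h).det : ℤ) : ℝ)| * Real.sqrt (Matrix.of fun i j => ⟪c i, c j⟫).det
      ≤ ∏ t : Fin r, ‖a (h t)‖ := by
  classical
  set M : Matrix (Fin r) (Fin r) ℝ := (Bm.submatrix id h).map (Int.cast : ℤ → ℝ) with hM
  have hgram : (Matrix.of fun s s' => ⟪a (h s), a (h s')⟫ : Matrix (Fin r) (Fin r) ℝ)
      = Mᵀ * (Matrix.of fun i j => ⟪c i, c j⟫) * M := by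
    ext s s'
    simp only [Matrix.mul_apply, Matrix.transpose_apply, Matrix.of_apply, hM,
      Matrix.map_apply, Matrix.submatrix_apply, id_eq]
    rw [hBa (h s), hBa (h s'), sum_inner]
    simp only [real_inner_smul_left, inner_sum, real_inner_smul_right, Finset.mul_sum,
      Finset.sum_mul]
    rw [Finset.sum_comm]
    exact Finset.sum_congr rfl fun t _ => Finset.sum_congr rfl fun s _ => by ring
  have hdet : (Matrix.of fun s s' => ⟪a (h s), a (h s')⟫ : Matrix (Fin r) (Fin r) ℝ).det
      = M.det ^ 2 * (Matrix.of fun i j => ⟪c i, c j⟫).det := by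
    rw [hgram, Matrix.det_mul, Matrix.det_mul, Matrix.det_transpose]
    ring
  have hcast : (((Bm.submatrix id h).det : ℤ) : ℝ) = M.det := by
    rw [hM, show ((Bm.submatrix id h).map (Int.cast : ℤ → ℝ))
        = (Int.castRingHom ℝ).mapMatrix (Bm.submatrix id h) from rfl,
      ← RingHom.map_det]
    rfl
  have hle := sqrt_gram_det_le (fun t => a (h t))
  rw [show (Matrix.of fun s s' => ⟪a (h s), a (h s')⟫ : Matrix (Fin r) (Fin r) ℝ).det
      = (Matrix.of fun s s' => ⟪(fun t => a (h t)) s, (fun t => a (h t)) s'⟫ :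
        Matrix (Fin r) (Fin r) ℝ).det from rfl, hdet] at hle
  rw [Real.sqrt_mul (sq_nonneg _), Real.sqrt_sq_eq_abs] at hle
  rw [hcast]
  exact hle

/-- Linearly independent relations of bounded norm: if the lattice `L ⊆ ℝⁿ` of rank `r`
(with ℤ-basis `c`, so its covolume is `det(L) = √det(Gram c)`) is generated by
`a₁,…,a_k` with `‖a_j‖ ≤ α`, then there are `k − r` linearly independent relations
`m₁,…,m_{k−r} ∈ ℤᵏ` with `‖m_j‖_∞ ≤ αʳ/det(L)`. -/
theorem relations_of_bounded_norm {n k r : ℕ} (hkr : r ≤ k)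
    (a : Fin k → EuclideanSpace ℝ (Fin n)) (α : ℝ) (hα : ∀ j, ‖a j‖ ≤ α)
    (c : Fin r → EuclideanSpace ℝ (Fin n)) (hc : LinearIndependent ℝ c)
    (L : Submodule ℤ (EuclideanSpace ℝ (Fin n)))
    (hLa : L = Submodule.span ℤ (Set.range a))
    (hLc : L = Submodule.span ℤ (Set.range c))
    (detL : ℝ)
    (hdet : detL = Real.sqrt (Matrix.of fun i j => ⟪c i, c j⟫).det) :
    ∃ m : Fin (k - r) → (Fin k → ℤ),
      LinearIndependent ℚ (fun j => fun i => ((m j i : ℚ))) ∧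
      (∀ j, ∑ i, (m j i : ℝ) • a i = 0) ∧
      (∀ j i, (|m j i| : ℝ) ≤ α^r / detL) := by
  classical
  have hdetpos : 0 < detL := by
    rw [hdet]; exact Real.sqrt_pos.2 (gram_det_pos hc)
  -- coordinates of the `a i` in terms of `c`
  have haL : ∀ i, a i ∈ Submodule.span ℤ (Set.range c) := fun i => by
    rw [← hLc, hLa]; exact Submodule.subset_span ⟨i, rfl⟩
  choose B hB using fun i => (Submodule.mem_span_range_iff_exists_fun ℤ).1 (haL i)
  set Bm : Matrix (Fin r) (Fin k) ℤ := Matrix.of fun t i => B i t with hBm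
  have hBa : ∀ i, a i = ∑ t : Fin r, (Bm t i : ℝ) • c t := by
    intro i
    rw [← hB i]
    exact (Finset.sum_congr rfl fun t _ => (Int.cast_smul_eq_zsmul ℝ _ _)).symm
  -- the key determinant bound
  have key : ∀ h : Fin r → Fin k, |(((Bm.submatrix id h).det : ℤ) : ℝ)| ≤ α ^ r / detL := by
    intro h
    have h1 := det_mul_sqrt_le a c Bm hBa h
    rw [← hdet] at h1
    have h2 : ∏ t : Fin r, ‖a (h t)‖ ≤ α ^ r := by
      calc ∏ t : Fin r, ‖a (h t)‖ ≤ ∏ t : Fin r, α :=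
            Finset.prod_le_prod (fun t _ => norm_nonneg _) fun t _ => hα (h t)
        _ = α ^ r := by simp [Finset.prod_const, Finset.card_univ]
    rw [le_div_iff₀ hdetpos]
    exact h1.trans h2
  -- the columns of `Bm` span `ℝ^r`
  set cols : Fin k → (Fin r → ℝ) := fun i t => (Bm t i : ℝ) with hcols
  have hspan : Submodule.span ℝ (Set.range cols) = ⊤ := by
    rw [eq_top_iff, ← (Pi.basisFun ℝ (Fin r)).span_eq, Submodule.span_le]
    rintro x ⟨t, rfl⟩
    have hct : c t ∈ Submodule.span ℤ (Set.range a) := by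
      rw [← hLa, hLc]; exact Submodule.subset_span ⟨t, rfl⟩
    obtain ⟨A, hA⟩ := (Submodule.mem_span_range_iff_exists_fun ℤ).1 hct
    have hA' : ∑ i : Fin k, (A i : ℝ) • a i = c t := by
      rw [← hA]
      exact Finset.sum_congr rfl fun i _ => (Int.cast_smul_eq_zsmul ℝ _ _)
    have hct' : ∑ s : Fin r, ((∑ i : Fin k, (A i : ℝ) * (Bm s i : ℝ)) - if s = t then 1 else 0)
        • c s = 0 := by
      have expand : ∑ i : Fin k, (A i : ℝ) • a i
          = ∑ s : Fin r, (∑ i : Fin k, (A i : ℝ) * (Bm s i : ℝ)) • c s := by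
        rw [Finset.sum_congr rfl fun i (_ : i ∈ Finset.univ) => by
          rw [hBa i, Finset.smul_sum]]
        rw [Finset.sum_comm]
        exact Finset.sum_congr rfl fun s _ => by
          rw [Finset.sum_smul]
          exact Finset.sum_congr rfl fun i _ => by rw [smul_smul]
      have single : ∑ s : Fin r, (if s = t then (1:ℝ) else 0) • c s = c t := by
        simp [ite_smul]
      simp only [sub_smul, Finset.sum_sub_distrib, ← expand, hA', single, sub_self]
    have hcoef := Fintype.linearIndependent_iff.1 hc _ hct'
    have hx : (Pi.basisFun ℝ (Fin r)) t = ∑ i : Fin k, (A i : ℝ) • cols i := by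
      ext s
      have := sub_eq_zero.1 (hcoef s)
      simp only [Pi.basisFun_apply, Finset.sum_apply, Pi.smul_apply, smul_eq_mul, hcols]
      rw [this]
      by_cases hst : s = t
      · subst hst; simp [Pi.single_apply]
      · simp [Pi.single_apply, hst]
    rw [hx]
    exact Submodule.sum_mem _ fun i _ =>
      Submodule.smul_mem _ _ (Submodule.subset_span ⟨i, rfl⟩)
  -- extract a basis from the columns
  obtain ⟨s, hs_sub, hs_span, hs_li⟩ := exists_linearIndependent ℝ (Set.range cols)
  have hs_top : Submodule.span ℝ s = ⊤ := by rw [hs_span, hspan]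
  have hs_fin : s.Finite := hs_li.setFinite
  haveI : Fintype s := hs_fin.fintype
  have hcard : Fintype.card s = r := by
    have hb : Module.Basis s ℝ (Fin r → ℝ) := Module.Basis.mk hs_li (by rw [Subtype.range_coe, hs_top])
    have := Module.finrank_eq_card_basis hb
    rw [Module.finrank_fin_fun] at this
    exact this.symm
  let e : Fin r ≃ s := (Fintype.equivFinOfCardEq hcard).symm
  choose pre hpre using fun x : s => hs_sub x.2
  set f : Fin r → Fin k := fun t => pre (e t) with hf
  have hfc : ∀ t, cols (f t) = (e t : Fin r → ℝ) := fun t => hpre (e t)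
  have hfli : LinearIndependent ℝ (fun t => cols (f t)) := by
    have : (fun t => cols (f t)) = (fun t => ((e t : Fin r → ℝ))) := funext hfc
    rw [this]
    exact hs_li.comp e e.injective
  have hfinj : Function.Injective f := by
    intro t t' htt
    have : cols (f t) = cols (f t') := by rw [htt]
    rw [hfc, hfc] at this
    exact e.injective (Subtype.ext this)
  -- nonvanishing determinant
  set Mf : Matrix (Fin r) (Fin r) ℝ := (Bm.submatrix id f).map (Int.cast : ℤ → ℝ) with hMf
  have hMfcols : (fun j => Mfᵀ j) = fun j => cols (f j) := by
    funext j; funext t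
    simp [hMf, Matrix.transpose_apply, Matrix.map_apply, Matrix.submatrix_apply, hcols]
  have hMfdet : Mf.det ≠ 0 := by
    have : IsUnit Mf.det := (Matrix.isUnit_iff_isUnit_det Mf).1
      (Matrix.linearIndependent_cols_iff_isUnit.1 (by rw [show Mf.col = fun j => Mfᵀ j from rfl, hMfcols]; exact hfli))
    exact this.ne_zero
  set D : ℤ := (Bm.submatrix id f).det with hD
  have hDcast : ((D : ℤ) : ℝ) = Mf.det := by
    rw [hD, hMf, show ((Bm.submatrix id f).map (Int.cast : ℤ → ℝ))
        = (Int.castRingHom ℝ).mapMatrix (Bm.submatrix id f) from rfl,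
      ← RingHom.map_det]
    rfl
  have hDne : D ≠ 0 := fun h => hMfdet (by rw [← hDcast, h, Int.cast_zero])
  -- enumerate the complement of the range of f
  set T : Finset (Fin k) := (Finset.univ.image f)ᶜ with hT
  have hTcard : T.card = k - r := by
    rw [hT, Finset.card_compl, Finset.card_image_of_injective _ hfinj, Finset.card_univ,
      Fintype.card_fin, Fintype.card_fin]
  set g : Fin (k - r) → Fin k := fun j => ((T.orderIsoOfFin hTcard) j : Fin k) with hg
  have hginj : Function.Injective g := fun j j' h =>
    (T.orderIsoOfFin hTcard).injective (Subtype.ext h)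
  have hgf : ∀ j t, f t ≠ g j := by
    intro j t h
    have hmem : g j ∈ T := ((T.orderIsoOfFin hTcard) j).2
    rw [hT, Finset.mem_compl] at hmem
    exact hmem (Finset.mem_image.2 ⟨t, Finset.mem_univ t, h⟩)
  -- the relations
  set cr : Fin (k - r) → Fin r → ℤ :=
    fun j => Matrix.cramer (Bm.submatrix id f) (fun s => Bm s (g j)) with hcr
  set m : Fin (k - r) → Fin k → ℤ := fun j i =>
    (∑ t : Fin r, if i = f t then cr j t else 0) - (if i = g j then D else 0) with hm
  have hmg : ∀ j j', m j (g j') = if j' = j then -D else 0 := by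
    intro j j'
    have h1 : ∑ t : Fin r, (if g j' = f t then cr j t else 0) = 0 :=
      Finset.sum_eq_zero fun t _ => if_neg fun h => hgf j' t h.symm
    rw [hm]
    simp only [h1, zero_sub]
    by_cases hjj : j' = j
    · subst hjj; simp
    · rw [if_neg fun h => hjj (hginj h), if_neg hjj, neg_zero]
  have hmf : ∀ j t, m j (f t) = cr j t := by
    intro j t
    rw [hm]
    simp only
    rw [Finset.sum_eq_single t (fun t' _ ht' => if_neg fun h => ht' (hfinj h.symm))
      (fun h => absurd (Finset.mem_univ t) h), if_pos rfl, if_neg (hgf j t), sub_zero]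
  have hcrdet : ∀ j t, cr j t = (Bm.submatrix id (Function.update f t (g j))).det := by
    intro j t
    simp only [hcr, Matrix.cramer_apply]
    congr 1
    ext s' t'
    simp only [Matrix.updateCol_apply, Matrix.submatrix_apply, id_eq, Function.update_apply]
    split_ifs <;> rfl
  refine ⟨m, ?_, ?_, ?_⟩
  · -- linear independence
    rw [Fintype.linearIndependent_iff]
    intro q hq j₀
    have hq0 := congr_fun hq (g j₀)
    simp only [Finset.sum_apply, Pi.smul_apply, smul_eq_mul, Pi.zero_apply] at hq0
    have hterm : ∀ j : Fin (k - r),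
        q j * ((m j (g j₀) : ℤ) : ℚ) = if j₀ = j then q j * ((-D : ℤ) : ℚ) else 0 := by
      intro j
      rw [hmg j j₀]
      split_ifs with h
      · rfl
      · simp
    rw [Finset.sum_congr rfl fun j _ => hterm j,
      Finset.sum_ite_eq Finset.univ j₀ (fun j => q j * ((-D : ℤ) : ℚ))] at hq0
    simp only [Finset.mem_univ, if_true] at hq0
    rcases mul_eq_zero.1 hq0 with h | h
    · exact h
    · exact absurd h (by simp [hDne])
  · -- the relations
    intro j
    have hsum : ∀ i : Fin k, ((m j i : ℤ) : ℝ) • a i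
        = (∑ t : Fin r, if i = f t then ((cr j t : ℤ) : ℝ) • a i else 0)
          - (if i = g j then ((D : ℤ) : ℝ) • a i else 0) := by
      intro i
      rw [hm]
      simp only
      push_cast
      rw [sub_smul, Finset.sum_smul]
      congr 1
      · exact Finset.sum_congr rfl fun t _ => by split_ifs <;> simp
      · split_ifs <;> simp
    rw [Finset.sum_congr rfl fun i _ => hsum i, Finset.sum_sub_distrib]
    rw [Finset.sum_comm]
    rw [Finset.sum_congr rfl fun t (_ : t ∈ Finset.univ) =>
      Finset.sum_ite_eq' Finset.univ (f t) (fun i => ((cr j t : ℤ) : ℝ) • a i)]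
    rw [Finset.sum_ite_eq' Finset.univ (g j) (fun i => ((D : ℤ) : ℝ) • a i)]
    simp only [Finset.mem_univ, if_pos]
    rw [sub_eq_zero]
    have hmv := Matrix.mulVec_cramer (Bm.submatrix id f) (fun s => Bm s (g j))
    calc ∑ t : Fin r, ((cr j t : ℤ) : ℝ) • a (f t)
        = ∑ t : Fin r, ∑ s : Fin r, (((cr j t : ℤ) : ℝ) * ((Bm s (f t) : ℤ) : ℝ)) • c s := by
          refine Finset.sum_congr rfl fun t _ => ?_
          rw [hBa (f t), Finset.smul_sum]
          exact Finset.sum_congr rfl fun s _ => by rw [smul_smul]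
      _ = ∑ s : Fin r, (((D : ℤ) : ℝ) * ((Bm s (g j) : ℤ) : ℝ)) • c s := by
          rw [Finset.sum_comm]
          refine Finset.sum_congr rfl fun s _ => ?_
          rw [← Finset.sum_smul]
          congr 1
          have hmvs := congr_fun hmv s
          simp only [Matrix.mulVec, dotProduct, Matrix.submatrix_apply, id_eq,
            Pi.smul_apply, smul_eq_mul] at hmvs
          have : ∑ t : Fin r, ((cr j t : ℤ) : ℝ) * ((Bm s (f t) : ℤ) : ℝ)
              = (((∑ t : Fin r, Bm s (f t) * cr j t : ℤ)) : ℝ) := by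
            push_cast
            exact Finset.sum_congr rfl fun t _ => by ring
          rw [this, hmvs, ← hD]
          push_cast
          ring
      _ = ((D : ℤ) : ℝ) • a (g j) := by
          rw [hBa (g j), Finset.smul_sum]
          exact (Finset.sum_congr rfl fun s _ => by rw [smul_smul]).symm
  · -- the bounds
    intro j i
    by_cases h1 : ∃ t, i = f t
    · obtain ⟨t, rfl⟩ := h1
      rw [hmf j t, hcrdet j t]
      exact key _
    · by_cases h2 : i = g j
      · subst h2
        rw [hmg j j, if_pos rfl]
        rw [Int.cast_neg, abs_neg]
        exact key f
      · have : m j i = 0 := by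
          rw [hm]
          simp only
          rw [if_neg h2, sub_zero]
          exact Finset.sum_eq_zero fun t _ => if_neg fun h => h1 ⟨t, h⟩
        rw [this, Int.cast_zero, abs_zero]
        exact le_trans (abs_nonneg _) (key f)
end
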